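/- arXiv:2312.08433 — 2 statements merged into one kernel-verified Lean document; each statement's English description precedes it below -/
import Mathlib

section
/- Let n ≥ 1 and k ≥ 1 be natural numbers. Then ∑_{τ ∈ S_{2n}} ∑_{o : {1,…,n} → {1,…,k}} ∏_{j=1}^{n} [ o_{⌈τ(2j−1)/2⌉} = o_{⌈τ(2j)/2⌉} ] = 2^n · n! · ∏_{j=0}^{n−1} (k + 2j), where S_{2n} is the symmetric group on {1,…,2n}, ⌈·⌉ denotes the ceiling function (so ⌈x/2⌉ maps {1,…,2n} onto {1,…,n}), and [P] is the indicator which is 1 if P holds and 0 otherwise. -/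
open scoped BigOperators

namespace GBS

/-- The 0-indexed version of the 1-indexed element `2j-1` of `{1,…,2n}`. -/
def lo (n : ℕ) (j : Fin n) : Fin (2 * n) := ⟨2 * (j : ℕ), by omega⟩

/-- The 0-indexed version of the 1-indexed element `2j` of `{1,…,2n}`. -/
def hi (n : ℕ) (j : Fin n) : Fin (2 * n) := ⟨2 * (j : ℕ) + 1, by omega⟩

/-- `half n x = ⌊x/2⌋` as a map `Fin (2*n) → Fin n`; with 0-indexing this is the map
`ℓ ↦ ⌈ℓ/2⌉` of the 1-indexed statement, sending `{1,…,2n}` onto `{1,…,n}`. -/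
def half (n : ℕ) (x : Fin (2 * n)) : Fin n := ⟨(x : ℕ) / 2, by omega⟩

/-! ### Auxiliary development -/

/-- Inner sum over colorings, for a fixed permutation. -/
def X (n k : ℕ) (τ : Equiv.Perm (Fin (2 * n))) : ℕ :=
  ∑ o : Fin n → Fin k, ∏ j : Fin n,
    (if o (half n (τ (lo n j))) = o (half n (τ (hi n j))) then 1 else 0 : ℕ)

/-- The full double sum. -/
def F (n k : ℕ) : ℕ := ∑ τ : Equiv.Perm (Fin (2 * n)), X n k τ

/-- second-to-last position. -/
def L0 (n : ℕ) : Fin (2 * (n + 1)) := ⟨2 * n, by omega⟩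
/-- last position. -/
def L1 (n : ℕ) : Fin (2 * (n + 1)) := ⟨2 * n + 1, by omega⟩

def emb (n : ℕ) (x : Fin (2 * n)) : Fin (2 * (n + 1)) := ⟨x.val, by omega⟩

lemma L0_ne_L1 (n : ℕ) : L0 n ≠ L1 n := by
  simp [L0, L1, Fin.ext_iff]

lemma half_lo (n : ℕ) (j : Fin n) : half n (lo n j) = j := by
  apply Fin.ext; show 2 * (j : ℕ) / 2 = (j : ℕ); omega

lemma half_hi (n : ℕ) (j : Fin n) : half n (hi n j) = j := by
  apply Fin.ext; show (2 * (j : ℕ) + 1) / 2 = (j : ℕ); omega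

lemma lo_last (n : ℕ) : lo (n + 1) (Fin.last n) = L0 n := rfl
lemma hi_last (n : ℕ) : hi (n + 1) (Fin.last n) = L1 n := rfl
lemma lo_castSucc (n : ℕ) (j : Fin n) :
    lo (n + 1) (Fin.castSucc j) = emb n (lo n j) := rfl
lemma hi_castSucc (n : ℕ) (j : Fin n) :
    hi (n + 1) (Fin.castSucc j) = emb n (hi n j) := rfl

lemma half_emb (n : ℕ) (x : Fin (2 * n)) :
    half (n + 1) (emb n x) = Fin.castSucc (half n x) := rfl

lemma half_L0 (n : ℕ) : half (n + 1) (L0 n) = Fin.last n := by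
  apply Fin.ext; show 2 * n / 2 = n; omega

lemma half_L1 (n : ℕ) : half (n + 1) (L1 n) = Fin.last n := by
  apply Fin.ext; show (2 * n + 1) / 2 = n; omega

lemma eq_lo_or_hi {m : ℕ} {y : Fin (2 * m)} {i : Fin m} (h : half m y = i) :
    y = lo m i ∨ y = hi m i := by
  have hv : y.val / 2 = i.val := congrArg Fin.val h
  rcases Nat.lt_or_ge y.val (2 * i.val + 1) with h' | h'
  · left; apply Fin.ext; simp [lo]; omega
  · right; apply Fin.ext; simp [hi]; omega

lemma lo_ne_hi {m : ℕ} (j j' : Fin m) : lo m j ≠ hi m j' := by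
  simp [lo, hi, Fin.ext_iff]; omega

/-- Key invariance: if `σ` maps position-pairs to position-pairs (quotient permutation `π`),
then precomposing `τ` by `σ` does not change `X`. -/
lemma X_mul {m k : ℕ} (τ σ : Equiv.Perm (Fin (2 * m))) (π : Equiv.Perm (Fin m))
    (h : ∀ x, half m (σ x) = π (half m x)) :
    X m k (τ * σ) = X m k τ := by
  unfold X
  refine Finset.sum_congr rfl (fun o _ => ?_)
  rw [← Equiv.prod_comp π
    (fun j => (if o (half m (τ (lo m j))) = o (half m (τ (hi m j))) then 1 else 0 : ℕ))]
  refine Finset.prod_congr rfl (fun j _ => ?_)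
  have h1 : half m (σ (lo m j)) = π j := by rw [h, half_lo]
  have h2 : half m (σ (hi m j)) = π j := by rw [h, half_hi]
  have hne : σ (lo m j) ≠ σ (hi m j) := by
    simp only [ne_eq, EmbeddingLike.apply_eq_iff_eq]
    exact lo_ne_hi j j
  simp only [Equiv.Perm.mul_apply]
  have ind_comm : ∀ a b : Fin k, (if a = b then 1 else 0 : ℕ) = if b = a then 1 else 0 := by
    intro a b
    by_cases hab : a = b
    · simp [hab]
    · simp [hab, Ne.symm hab]
  rcases eq_lo_or_hi h1 with e1 | e1 <;> rcases eq_lo_or_hi h2 with e2 | e2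
  · exact absurd (e1.trans e2.symm) hne
  · simp only [e1, e2]
  · simp only [e1, e2]; apply ind_comm
  · exact absurd (e1.trans e2.symm) hne

def partner {n : ℕ} (q : Fin (2 * (n + 1))) : Fin (2 * (n + 1)) :=
  ⟨2 * (q.val / 2) + (1 - q.val % 2), by omega⟩

/-- The pair-respecting permutation carrying `q` to the last position `L1`. -/
def sigma (n : ℕ) (q : Fin (2 * (n + 1))) : Equiv.Perm (Fin (2 * (n + 1))) :=
  if q = L0 n then Equiv.swap (L0 n) (L1 n)
  else Equiv.swap q (L1 n) * Equiv.swap (partner q) (L0 n)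

lemma sigma_apply_self (n : ℕ) (q : Fin (2 * (n + 1))) : sigma n q q = L1 n := by
  unfold sigma
  by_cases hq : q = L0 n
  · simp [hq]
  · rw [if_neg hq]
    have h1 : q ≠ partner q := by
      simp [partner, Fin.ext_iff]; omega
    have h2 : q ≠ L0 n := hq
    simp only [Equiv.Perm.mul_apply]
    rw [Equiv.swap_apply_of_ne_of_ne h1 h2, Equiv.swap_apply_left]

lemma half_sigma (n : ℕ) (q : Fin (2 * (n + 1))) (x : Fin (2 * (n + 1))) :
    half (n + 1) (sigma n q x) =
      Equiv.swap (half (n + 1) q) (Fin.last n) (half (n + 1) x) := by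
  unfold sigma
  by_cases hq : q = L0 n
  · rw [if_pos hq, hq]
    simp only [Equiv.swap_apply_def]
    apply Fin.ext
    simp only [Fin.ext_iff, half, L0, L1, Fin.last]
    split_ifs <;> simp_all [Fin.ext_iff, half, L0, L1, Fin.last] <;> omega
  · rw [if_neg hq]
    simp only [Equiv.Perm.mul_apply, Equiv.swap_apply_def]
    apply Fin.ext
    simp only [Fin.ext_iff, half, L0, L1, partner, Fin.last]
    split_ifs <;> simp_all [Fin.ext_iff, half, L0, L1, partner, Fin.last] <;> omega

lemma F_succ_step1 (n k : ℕ) :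
    F (n + 1) k = (2 * (n + 1)) *
      ∑ τ : Equiv.Perm (Fin (2 * (n + 1))), if τ (L1 n) = L1 n then X (n + 1) k τ else 0 := by
  have key : ∀ q : Fin (2 * (n + 1)),
      (∑ τ : Equiv.Perm (Fin (2 * (n + 1))), if τ q = L1 n then X (n + 1) k τ else 0)
        = ∑ τ : Equiv.Perm (Fin (2 * (n + 1))), if τ (L1 n) = L1 n then X (n + 1) k τ else 0 := by
    intro q
    rw [← Equiv.sum_comp (Equiv.mulRight (sigma n q))
      (fun τ => if τ q = L1 n then X (n + 1) k τ else 0)]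
    refine Finset.sum_congr rfl (fun τ _ => ?_)
    have h1 : (Equiv.mulRight (sigma n q) τ) q = τ (L1 n) := by
      simp [Equiv.Perm.mul_apply, sigma_apply_self]
    have h2 : X (n + 1) k (Equiv.mulRight (sigma n q) τ) = X (n + 1) k τ := by
      simpa using X_mul τ (sigma n q) (Equiv.swap (half (n+1) q) (Fin.last n)) (half_sigma n q)
    rw [h1, h2]
  have expand : F (n + 1) k = ∑ q : Fin (2 * (n + 1)),
      ∑ τ : Equiv.Perm (Fin (2 * (n + 1))), if τ q = L1 n then X (n + 1) k τ else 0 := by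
    rw [Finset.sum_comm]
    unfold F
    refine Finset.sum_congr rfl (fun τ _ => ?_)
    have : ∀ q : Fin (2 * (n + 1)), (if τ q = L1 n then X (n + 1) k τ else 0)
        = if q = τ.symm (L1 n) then X (n + 1) k τ else 0 := by
      intro q
      simp [Equiv.apply_eq_iff_eq_symm_apply]
    simp only [this]
    rw [Finset.sum_ite_eq']
    simp
  rw [expand]
  simp only [key]
  rw [Finset.sum_const, Finset.card_univ, Fintype.card_fin, smul_eq_mul]

def ext (n : ℕ) (τ : Equiv.Perm (Fin (2 * n))) : Equiv.Perm (Fin (2 * (n + 1))) where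
  toFun x := if h : x.val < 2 * n then emb n (τ ⟨x.val, h⟩) else x
  invFun x := if h : x.val < 2 * n then emb n (τ.symm ⟨x.val, h⟩) else x
  left_inv x := by
    dsimp only
    by_cases h : x.val < 2 * n
    · rw [dif_pos h]
      have h2 : (emb n (τ ⟨x.val, h⟩)).val < 2 * n := (τ ⟨x.val, h⟩).isLt
      rw [dif_pos h2]
      apply Fin.ext
      have he : (⟨(emb n (τ ⟨x.val, h⟩)).val, h2⟩ : Fin (2 * n)) = τ ⟨x.val, h⟩ := by
        apply Fin.ext; rfl
      rw [he, Equiv.symm_apply_apply]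
      rfl
    · rw [dif_neg h, dif_neg h]
  right_inv x := by
    dsimp only
    by_cases h : x.val < 2 * n
    · rw [dif_pos h]
      have h2 : (emb n (τ.symm ⟨x.val, h⟩)).val < 2 * n := (τ.symm ⟨x.val, h⟩).isLt
      rw [dif_pos h2]
      apply Fin.ext
      have he : (⟨(emb n (τ.symm ⟨x.val, h⟩)).val, h2⟩ : Fin (2 * n)) = τ.symm ⟨x.val, h⟩ := by
        apply Fin.ext; rfl
      rw [he, Equiv.apply_symm_apply]
      rfl
    · rw [dif_neg h, dif_neg h]

lemma ext_emb (n : ℕ) (τ : Equiv.Perm (Fin (2 * n))) (x : Fin (2 * n)) :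
    ext n τ (emb n x) = emb n (τ x) := by
  show (if h : (emb n x).val < 2 * n then emb n (τ ⟨(emb n x).val, h⟩) else emb n x)
    = emb n (τ x)
  rw [dif_pos (show ((emb n x).val : ℕ) < 2 * n from x.isLt)]
  congr 2

lemma ext_L0 (n : ℕ) (τ : Equiv.Perm (Fin (2 * n))) : ext n τ (L0 n) = L0 n := by
  show (if h : (L0 n).val < 2 * n then emb n (τ ⟨(L0 n).val, h⟩) else L0 n) = L0 n
  rw [dif_neg (by show ¬(2 * n < 2 * n); omega)]

lemma ext_L1 (n : ℕ) (τ : Equiv.Perm (Fin (2 * n))) : ext n τ (L1 n) = L1 n := by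
  show (if h : (L1 n).val < 2 * n then emb n (τ ⟨(L1 n).val, h⟩) else L1 n) = L1 n
  rw [dif_neg (by show ¬(2 * n + 1 < 2 * n); omega)]

lemma sum_fix (n : ℕ) (G : Equiv.Perm (Fin (2 * (n + 1))) → ℕ) :
    (∑ τ : Equiv.Perm (Fin (2 * (n + 1))),
        if τ (L1 n) = L1 n ∧ τ (L0 n) = L0 n then G τ else 0)
      = ∑ τ' : Equiv.Perm (Fin (2 * n)), G (ext n τ') := by
  rw [← Finset.sum_filter]
  symm
  apply Finset.sum_bij (i := fun τ' (_ : τ' ∈ Finset.univ) => ext n τ')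
  · intro τ' _
    simp only [Finset.mem_filter, Finset.mem_univ, true_and]
    exact ⟨ext_L1 n τ', ext_L0 n τ'⟩
  · intro τ₁ _ τ₂ _ hext
    apply Equiv.ext; intro x
    have h1 : ext n τ₁ (emb n x) = ext n τ₂ (emb n x) := by rw [hext]
    rw [ext_emb, ext_emb] at h1
    have hv := congrArg Fin.val h1
    exact Fin.ext hv
  · intro τ ht
    simp only [Finset.mem_filter, Finset.mem_univ, true_and] at ht
    obtain ⟨h1, h0⟩ := ht
    have h0s : τ.symm (L0 n) = L0 n := by rw [Equiv.symm_apply_eq, h0]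
    have h1s : τ.symm (L1 n) = L1 n := by rw [Equiv.symm_apply_eq, h1]
    have hb : ∀ (σ : Equiv.Perm (Fin (2 * (n + 1)))), σ (L0 n) = L0 n → σ (L1 n) = L1 n →
        ∀ x : Fin (2 * n), (σ (emb n x)).val < 2 * n := by
      intro σ hσ0 hσ1 x
      have hlt := (σ (emb n x)).isLt
      have e0 : (σ (emb n x)).val ≠ 2 * n := by
        intro hc
        have : σ (emb n x) = σ (L0 n) := by rw [hσ0]; exact Fin.ext hc
        have := congrArg Fin.val (σ.injective this)
        have hx := x.isLt
        simp only [emb, L0] at this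
        omega
      have e1 : (σ (emb n x)).val ≠ 2 * n + 1 := by
        intro hc
        have : σ (emb n x) = σ (L1 n) := by rw [hσ1]; exact Fin.ext hc
        have := congrArg Fin.val (σ.injective this)
        have hx := x.isLt
        simp only [emb, L1] at this
        omega
      omega
    refine ⟨⟨fun x => ⟨(τ (emb n x)).val, hb τ h0 h1 x⟩,
             fun x => ⟨(τ.symm (emb n x)).val, hb τ.symm h0s h1s x⟩, ?_, ?_⟩,
            Finset.mem_univ _, ?_⟩
    · intro x
      apply Fin.ext
      show (τ.symm (emb n ⟨(τ (emb n x)).val, _⟩)).val = x.val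
      have he : emb n (⟨(τ (emb n x)).val, hb τ h0 h1 x⟩ : Fin (2 * n)) = τ (emb n x) := by
        apply Fin.ext; rfl
      rw [he, Equiv.symm_apply_apply]
      rfl
    · intro x
      apply Fin.ext
      show (τ (emb n ⟨(τ.symm (emb n x)).val, _⟩)).val = x.val
      have he : emb n (⟨(τ.symm (emb n x)).val, hb τ.symm h0s h1s x⟩ : Fin (2 * n))
          = τ.symm (emb n x) := by
        apply Fin.ext; rfl
      rw [he, Equiv.apply_symm_apply]
      rfl
    · apply Equiv.ext; intro x
      by_cases h : x.val < 2 * n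
      · show (if hh : x.val < 2 * n then emb n (⟨(τ (emb n ⟨x.val, hh⟩)).val, _⟩ : Fin (2 * n)) else x) = τ x
        rw [dif_pos h]
        have he2 : emb n (⟨x.val, h⟩ : Fin (2 * n)) = x := Fin.ext rfl
        apply Fin.ext
        show (τ (emb n ⟨x.val, h⟩)).val = (τ x).val
        rw [he2]
      · have hx2 := x.isLt
        have : x = L0 n ∨ x = L1 n := by
          rcases Nat.lt_or_ge x.val (2 * n + 1) with h' | h'
          · left; apply Fin.ext; show x.val = 2 * n; omega
          · right; apply Fin.ext; show x.val = 2 * n + 1; omega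
        rcases this with e | e
        · rw [e, ext_L0, h0]
        · rw [e, ext_L1, h1]
  · intro τ' _; rfl

def snocE (n k : ℕ) : ((Fin n → Fin k) × Fin k) ≃ (Fin (n + 1) → Fin k) where
  toFun p := Fin.snoc p.1 p.2
  invFun o := (Fin.init o, o (Fin.last n))
  left_inv p := by
    obtain ⟨o', v⟩ := p
    simp [Fin.init_snoc, Fin.snoc_last]
  right_inv o := Fin.snoc_init_self o

lemma snocE_apply (n k : ℕ) (o' : Fin n → Fin k) (v : Fin k) (i : Fin (n + 1)) :
    snocE n k (o', v) i = (Fin.snoc o' v : Fin (n + 1) → Fin k) i := rfl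

lemma half_p {n : ℕ} (p : Fin (2 * (n + 1))) (hp : p.val < 2 * n) :
    half (n + 1) p = Fin.castSucc (half n ⟨p.val, hp⟩) := by
  apply Fin.ext; rfl

lemma X_ext (n k : ℕ) (τ' : Equiv.Perm (Fin (2 * n))) :
    X (n + 1) k (ext n τ') = k * X n k τ' := by
  unfold X
  rw [← Equiv.sum_comp (snocE n k) (fun o => ∏ j : Fin (n + 1),
    (if o (half (n + 1) ((ext n τ') (lo (n + 1) j)))
        = o (half (n + 1) ((ext n τ') (hi (n + 1) j))) then 1 else 0 : ℕ))]
  rw [Fintype.sum_prod_type, Finset.mul_sum]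
  refine Finset.sum_congr rfl fun o' _ => ?_
  have hprod : ∀ v : Fin k,
      (∏ j : Fin (n + 1),
        (if (snocE n k (o', v)) (half (n + 1) ((ext n τ') (lo (n + 1) j)))
            = (snocE n k (o', v)) (half (n + 1) ((ext n τ') (hi (n + 1) j))) then 1 else 0 : ℕ))
      = ∏ j : Fin n,
        (if o' (half n (τ' (lo n j))) = o' (half n (τ' (hi n j))) then 1 else 0 : ℕ) := by
    intro v
    rw [Fin.prod_univ_castSucc]
    have hlast : (if (snocE n k (o', v)) (half (n + 1) ((ext n τ') (lo (n + 1) (Fin.last n))))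
        = (snocE n k (o', v)) (half (n + 1) ((ext n τ') (hi (n + 1) (Fin.last n))))
        then 1 else 0 : ℕ) = 1 := by
      rw [lo_last, hi_last, ext_L0, ext_L1, half_L0, half_L1, if_pos rfl]
    rw [hlast, mul_one]
    refine Finset.prod_congr rfl fun j _ => ?_
    rw [lo_castSucc, hi_castSucc, ext_emb, ext_emb, half_emb, half_emb,
        snocE_apply, snocE_apply, Fin.snoc_castSucc, Fin.snoc_castSucc]
  calc (∑ v : Fin k, ∏ j : Fin (n + 1),
        (if (snocE n k (o', v)) (half (n + 1) ((ext n τ') (lo (n + 1) j)))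
            = (snocE n k (o', v)) (half (n + 1) ((ext n τ') (hi (n + 1) j))) then 1 else 0 : ℕ))
      = ∑ _v : Fin k, ∏ j : Fin n,
          (if o' (half n (τ' (lo n j))) = o' (half n (τ' (hi n j))) then 1 else 0 : ℕ) :=
        Finset.sum_congr rfl fun v _ => hprod v
    _ = k * ∏ j : Fin n,
          (if o' (half n (τ' (lo n j))) = o' (half n (τ' (hi n j))) then 1 else 0 : ℕ) := by
        rw [Finset.sum_const, Finset.card_univ, Fintype.card_fin, smul_eq_mul]

lemma X_swap_ext (n k : ℕ) (p : Fin (2 * (n + 1))) (hp : p.val < 2 * n)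
    (τ' : Equiv.Perm (Fin (2 * n))) :
    X (n + 1) k (Equiv.swap p (L0 n) * ext n τ') = X n k τ' := by
  have hpL0 : p ≠ L0 n := by
    intro hc; have := congrArg Fin.val hc; simp only [L0] at this; omega
  have hpL1 : p ≠ L1 n := by
    intro hc; have := congrArg Fin.val hc; simp only [L1] at this; omega
  set pb : Fin (2 * n) := ⟨p.val, hp⟩ with hpb
  unfold X
  rw [← Equiv.sum_comp (snocE n k) (fun o => ∏ j : Fin (n + 1),
    (if o (half (n + 1) ((Equiv.swap p (L0 n) * ext n τ') (lo (n + 1) j)))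
        = o (half (n + 1) ((Equiv.swap p (L0 n) * ext n τ') (hi (n + 1) j))) then 1 else 0 : ℕ))]
  rw [Fintype.sum_prod_type]
  refine Finset.sum_congr rfl fun o' _ => ?_
  have hcol : ∀ (v : Fin k) (w : Fin (2 * n)),
      (snocE n k (o', v)) (half (n + 1) (Equiv.swap p (L0 n) (emb n w)))
        = if w = pb then v else o' (half n w) := by
    intro v w
    by_cases hw : w = pb
    · subst hw
      have he : emb n pb = p := Fin.ext rfl
      rw [he, Equiv.swap_apply_left, half_L0, if_pos rfl, snocE_apply]
      exact Fin.snoc_last _ _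
    · have h1 : emb n w ≠ p := by
        intro hc
        have hv := congrArg Fin.val hc
        exact hw (Fin.ext hv)
      have h2 : emb n w ≠ L0 n := by
        intro hc; have := congrArg Fin.val hc; simp only [emb, L0] at this
        have := w.isLt; omega
      rw [Equiv.swap_apply_of_ne_of_ne h1 h2, half_emb, if_neg hw, snocE_apply]
      exact Fin.snoc_castSucc _ _ _
  have hlast : ∀ v : Fin k,
      (if (snocE n k (o', v)) (half (n + 1) ((Equiv.swap p (L0 n) * ext n τ') (lo (n + 1) (Fin.last n))))
          = (snocE n k (o', v)) (half (n + 1) ((Equiv.swap p (L0 n) * ext n τ') (hi (n + 1) (Fin.last n))))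
        then 1 else 0 : ℕ)
      = if o' (half n pb) = v then 1 else 0 := by
    intro v
    rw [lo_last, hi_last]
    simp only [Equiv.Perm.mul_apply, ext_L0, ext_L1, Equiv.swap_apply_right,
        Equiv.swap_apply_of_ne_of_ne (Ne.symm hpL1) (Ne.symm (L0_ne_L1 n)),
        half_p p hp, half_L1, snocE_apply, Fin.snoc_castSucc, Fin.snoc_last]
    rfl
  have hmid : ∀ (v : Fin k) (j : Fin n),
      (if (snocE n k (o', v)) (half (n + 1) ((Equiv.swap p (L0 n) * ext n τ') (lo (n + 1) (Fin.castSucc j))))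
          = (snocE n k (o', v)) (half (n + 1) ((Equiv.swap p (L0 n) * ext n τ') (hi (n + 1) (Fin.castSucc j))))
        then 1 else 0 : ℕ)
      = if (if τ' (lo n j) = pb then v else o' (half n (τ' (lo n j))))
            = (if τ' (hi n j) = pb then v else o' (half n (τ' (hi n j)))) then 1 else 0 := by
    intro v j
    rw [lo_castSucc, hi_castSucc]
    simp only [Equiv.Perm.mul_apply, ext_emb, hcol v]
  calc (∑ v : Fin k, ∏ j : Fin (n + 1),
        (if (snocE n k (o', v)) (half (n + 1) ((Equiv.swap p (L0 n) * ext n τ') (lo (n + 1) j)))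
            = (snocE n k (o', v)) (half (n + 1) ((Equiv.swap p (L0 n) * ext n τ') (hi (n + 1) j))) then 1 else 0 : ℕ))
      = ∑ v : Fin k, (if o' (half n pb) = v then
          (∏ j : Fin n, (if (if τ' (lo n j) = pb then v else o' (half n (τ' (lo n j))))
            = (if τ' (hi n j) = pb then v else o' (half n (τ' (hi n j)))) then 1 else 0 : ℕ)) else 0) := by
        refine Finset.sum_congr rfl fun v _ => ?_
        rw [Fin.prod_univ_castSucc, hlast v]
        rw [Finset.prod_congr rfl fun j _ => hmid v j]
        rw [mul_ite, mul_one, mul_zero]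
    _ = ∏ j : Fin n, (if (if τ' (lo n j) = pb then o' (half n pb) else o' (half n (τ' (lo n j))))
            = (if τ' (hi n j) = pb then o' (half n pb) else o' (half n (τ' (hi n j)))) then 1 else 0 : ℕ) := by
        rw [Finset.sum_ite_eq, if_pos (Finset.mem_univ _)]
    _ = ∏ j : Fin n, (if o' (half n (τ' (lo n j))) = o' (half n (τ' (hi n j))) then 1 else 0 : ℕ) := by
        refine Finset.prod_congr rfl fun j _ => ?_
        have hw : ∀ w : Fin (2 * n),
            (if w = pb then o' (half n pb) else o' (half n w)) = o' (half n w) := by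
          intro w
          by_cases hww : w = pb
          · subst hww; rw [if_pos rfl]
          · rw [if_neg hww]
        rw [hw, hw]

lemma T_eq (n k : ℕ) :
    (∑ τ : Equiv.Perm (Fin (2 * (n + 1))), if τ (L1 n) = L1 n then X (n + 1) k τ else 0)
      = (k + 2 * n) * F n k := by
  have expand : (∑ τ : Equiv.Perm (Fin (2 * (n + 1))), if τ (L1 n) = L1 n then X (n + 1) k τ else 0)
      = ∑ p : Fin (2 * (n + 1)), ∑ τ : Equiv.Perm (Fin (2 * (n + 1))),
          if (τ (L1 n) = L1 n ∧ τ (L0 n) = p) then X (n + 1) k τ else 0 := by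
    rw [Finset.sum_comm]
    refine Finset.sum_congr rfl fun τ _ => ?_
    have hsplit : ∀ p : Fin (2 * (n + 1)),
        (if (τ (L1 n) = L1 n ∧ τ (L0 n) = p) then X (n + 1) k τ else 0)
          = if p = τ (L0 n) then (if τ (L1 n) = L1 n then X (n + 1) k τ else 0) else 0 := by
      intro p
      by_cases h1 : p = τ (L0 n)
      · subst h1; simp
      · have h2 : τ (L0 n) ≠ p := fun hc => h1 hc.symm
        simp [h1, h2]
    simp only [hsplit]
    rw [Finset.sum_ite_eq', if_pos (Finset.mem_univ _)]
  rw [expand]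
  have hI : ∀ p : Fin (2 * (n + 1)),
      (∑ τ : Equiv.Perm (Fin (2 * (n + 1))),
          if (τ (L1 n) = L1 n ∧ τ (L0 n) = p) then X (n + 1) k τ else 0)
        = if p = L1 n then 0 else if p = L0 n then k * F n k else F n k := by
    intro p
    by_cases hp1 : p = L1 n
    · subst hp1
      rw [if_pos rfl]
      apply Finset.sum_eq_zero
      intro τ _
      rw [if_neg]
      rintro ⟨h1, h0⟩
      exact L0_ne_L1 n (τ.injective (h0.trans h1.symm))
    · rw [if_neg hp1]
      by_cases hp0 : p = L0 n
      · subst hp0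
        rw [if_pos rfl, sum_fix n (fun τ => X (n + 1) k τ)]
        calc (∑ τ' : Equiv.Perm (Fin (2 * n)), X (n + 1) k (ext n τ'))
            = ∑ τ' : Equiv.Perm (Fin (2 * n)), k * X n k τ' :=
              Finset.sum_congr rfl fun τ' _ => X_ext n k τ'
          _ = k * F n k := by rw [← Finset.mul_sum]; rfl
      · rw [if_neg hp0]
        have hp : p.val < 2 * n := by
          have hlt := p.isLt
          have h1 : p.val ≠ 2 * n := fun hc => hp0 (Fin.ext hc)
          have h2 : p.val ≠ 2 * n + 1 := fun hc => hp1 (Fin.ext hc)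
          omega
        rw [← Equiv.sum_comp (Equiv.mulLeft (Equiv.swap p (L0 n)))
          (fun τ => if (τ (L1 n) = L1 n ∧ τ (L0 n) = p) then X (n + 1) k τ else 0)]
        have e1 : (Equiv.swap p (L0 n)) (L1 n) = L1 n :=
          Equiv.swap_apply_of_ne_of_ne (Ne.symm hp1) (Ne.symm (L0_ne_L1 n))
        have hcond : ∀ τ : Equiv.Perm (Fin (2 * (n + 1))),
            (if ((Equiv.mulLeft (Equiv.swap p (L0 n)) τ) (L1 n) = L1 n ∧
                 (Equiv.mulLeft (Equiv.swap p (L0 n)) τ) (L0 n) = p)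
              then X (n + 1) k (Equiv.mulLeft (Equiv.swap p (L0 n)) τ) else 0)
              = if (τ (L1 n) = L1 n ∧ τ (L0 n) = L0 n)
                  then X (n + 1) k (Equiv.swap p (L0 n) * τ) else 0 := by
          intro τ
          have happ : Equiv.mulLeft (Equiv.swap p (L0 n)) τ = Equiv.swap p (L0 n) * τ := rfl
          rw [happ]
          have hiff1 : (Equiv.swap p (L0 n) * τ) (L1 n) = L1 n ↔ τ (L1 n) = L1 n := by
            rw [Equiv.Perm.mul_apply]
            constructor
            · intro h
              have := congrArg (Equiv.swap p (L0 n)) h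
              rwa [Equiv.swap_apply_self, e1] at this
            · intro h; rw [h, e1]
          have hiff2 : (Equiv.swap p (L0 n) * τ) (L0 n) = p ↔ τ (L0 n) = L0 n := by
            rw [Equiv.Perm.mul_apply]
            constructor
            · intro h
              have := congrArg (Equiv.swap p (L0 n)) h
              rwa [Equiv.swap_apply_self, Equiv.swap_apply_left] at this
            · intro h; rw [h, Equiv.swap_apply_right]
          exact if_congr (and_congr hiff1 hiff2) rfl rfl
        simp only [hcond]
        rw [sum_fix n (fun τ => X (n + 1) k (Equiv.swap p (L0 n) * τ))]
        calc (∑ τ' : Equiv.Perm (Fin (2 * n)), X (n + 1) k (Equiv.swap p (L0 n) * ext n τ'))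
            = ∑ τ' : Equiv.Perm (Fin (2 * n)), X n k τ' :=
              Finset.sum_congr rfl fun τ' _ => X_swap_ext n k p hp τ'
          _ = F n k := rfl
  rw [Finset.sum_congr rfl fun p _ => hI p]
  rw [Finset.sum_eq_add_sum_sdiff_singleton_of_mem (Finset.mem_univ (L1 n)), if_pos rfl]
  have hmem : L0 n ∈ Finset.univ \ {L1 n} := by
    simp [L0_ne_L1 n]
  rw [Finset.sum_eq_add_sum_sdiff_singleton_of_mem hmem, if_neg (L0_ne_L1 n), if_pos rfl]
  have hconst : ∀ q ∈ (Finset.univ \ {L1 n}) \ {L0 n},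
      (if q = L1 n then 0 else if q = L0 n then k * F n k else F n k) = F n k := by
    intro q hq
    simp only [Finset.mem_sdiff, Finset.mem_singleton] at hq
    rw [if_neg hq.1.2, if_neg hq.2]
  rw [Finset.sum_congr rfl hconst, Finset.sum_const, smul_eq_mul]
  have hcard : ((Finset.univ \ {L1 n} : Finset (Fin (2 * (n + 1)))) \ {L0 n}).card = 2 * n := by
    rw [Finset.card_sdiff_of_subset (Finset.singleton_subset_iff.mpr hmem),
        Finset.card_sdiff_of_subset (Finset.singleton_subset_iff.mpr (Finset.mem_univ _))]
    simp only [Finset.card_univ, Fintype.card_fin, Finset.card_singleton]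
    omega
  rw [hcard]
  ring

lemma F_succ (n k : ℕ) : F (n + 1) k = 2 * (n + 1) * ((k + 2 * n) * F n k) := by
  rw [F_succ_step1, T_eq]

lemma F_zero (k : ℕ) : F 0 k = 1 := by
  unfold F X
  simp

lemma F_eq (n k : ℕ) : F n k = 2 ^ n * n.factorial * ∏ j ∈ Finset.range n, (k + 2 * j) := by
  induction n with
  | zero => simpa using F_zero k
  | succ n ih =>
    rw [F_succ, ih, Finset.prod_range_succ, pow_succ, Nat.factorial_succ]
    ring


/-- For `n, k ≥ 1`,
`∑_{τ ∈ S_{2n}} ∑_{o : {1,…,n} → {1,…,k}} ∏_{j=1}^{n} [o_{⌈τ(2j−1)/2⌉} = o_{⌈τ(2j)/2⌉}]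
  = 2^n · n! · ∏_{j=0}^{n−1} (k + 2j)`. -/
theorem sum_perm_sum_indices_indicator (n k : ℕ) (hn : 1 ≤ n) (hk : 1 ≤ k) :
    (∑ τ : Equiv.Perm (Fin (2 * n)), ∑ o : Fin n → Fin k,
        ∏ j : Fin n,
          (if o (half n (τ (lo n j))) = o (half n (τ (hi n j))) then 1 else 0 : ℕ)) =
      2 ^ n * n.factorial * ∏ j ∈ Finset.range n, (k + 2 * j) := by
  exact F_eq n k


end GBS
end

section
/- Let n ≥ 1 and let X be a 1×2n random matrix (a row vector) whose entries are independent standard complex Gaussian random variables. Then E[ |Haf(XᵀX)|⁴ ] = ((2n−1)!!)⁴ · 4^n, where (2n−1)!! = (2n)!/(2^n n!). -/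
open scoped BigOperators
open MeasureTheory ProbabilityTheory Matrix

namespace GBS

/-- The distribution of a standard complex Gaussian random variable `Z = A + iB`, where `A, B`
are independent real Gaussians with mean `0` and variance `1/2` (so `E[Z] = 0`, `E[|Z|²] = 1`). -/
noncomputable def stdComplexGaussian : Measure ℂ :=
  Measure.map Complex.measurableEquivRealProd.symm
    ((gaussianReal 0 (1 / 2)).prod (gaussianReal 0 (1 / 2)))

instance : IsProbabilityMeasure stdComplexGaussian :=
  Measure.isProbabilityMeasure_map Complex.measurableEquivRealProd.symm.measurable.aemeasurable

/-- The distribution of a `k × 2n` random matrix with i.i.d. standard complex Gaussian entries,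
as a measure on `Fin k → Fin (2*n) → ℂ`. -/
noncomputable def gaussianMatrix (k n : ℕ) : Measure (Fin k → Fin (2 * n) → ℂ) :=
  Measure.pi fun _ => Measure.pi fun _ => stdComplexGaussian

/-- The hafnian of a `2n × 2n` complex matrix:
`Haf(A) = (1/(2^n n!)) ∑_{σ ∈ S_{2n}} ∏_{j=1}^n A_{σ(2j−1), σ(2j)}`. -/
noncomputable def hafnian (n : ℕ) (A : Matrix (Fin (2 * n)) (Fin (2 * n)) ℂ) : ℂ :=
  (1 / (2 ^ n * n.factorial : ℂ)) *
    ∑ σ : Equiv.Perm (Fin (2 * n)), ∏ j : Fin n, A (σ (lo n j)) (σ (hi n j))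

section Auxiliary

open Real
open scoped NNReal ENNReal

private lemma pdf_half (x : ℝ) : gaussianPDFReal 0 (1/2) x = (√π)⁻¹ * rexp (-x^2) := by
  simp [gaussianPDFReal]
  rw [mul_comm ((√π)⁻¹) _, ← mul_assoc, mul_inv_cancel₀ (by positivity), one_mul]

private lemma gr_half : gaussianReal 0 (1/2) =
    volume.withDensity (fun x => ENNReal.ofReal ((√π)⁻¹ * rexp (-x^2))) := by
  rw [gaussianReal_of_var_ne_zero 0 (by norm_num)]
  congr 1
  ext x
  rw [gaussianPDF, pdf_half]

private lemma integral_gr_half (g : ℝ → ℝ) :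
    ∫ x, g x ∂(gaussianReal 0 (1/2)) = ∫ x, (√π)⁻¹ * rexp (-x^2) * g x := by
  rw [gr_half]
  have h : ∀ x : ℝ, ENNReal.ofReal ((√π)⁻¹ * rexp (-x^2))
      = ((Real.toNNReal ((√π)⁻¹ * rexp (-x^2)) : ℝ≥0) : ℝ≥0∞) := fun x => rfl
  simp_rw [h]
  rw [integral_withDensity_eq_integral_smul (by fun_prop) g]
  congr 1; ext x
  rw [NNReal.smul_def, Real.coe_toNNReal _ (by positivity), smul_eq_mul]

private lemma moment_exp (q : ℕ) :
    ∫ x : ℝ, (x^2) ^ q * rexp (-x^2) = Real.Gamma ((2*q+1)/2) := by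
  have h := integral_comp_abs (f := fun y : ℝ => (y^2) ^ q * rexp (-y^2))
  simp only [sq_abs] at h
  rw [h]
  have h1 : ∫ x in Set.Ioi (0:ℝ), (x^2) ^ q * rexp (-x^2)
      = ∫ x in Set.Ioi (0:ℝ), x ^ ((2*q : ℕ) : ℝ) * rexp (-x ^ (2:ℝ)) := by
    refine setIntegral_congr_fun measurableSet_Ioi (fun x hx => ?_)
    rw [Real.rpow_natCast, Real.rpow_two, pow_mul]
  rw [h1, integral_rpow_mul_exp_neg_rpow (by norm_num)
    (lt_of_lt_of_le neg_one_lt_zero (by positivity))]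
  push_cast
  ring

private lemma gamma_three_half : Real.Gamma (3/2) = √π / 2 := by
  have : (3/2 : ℝ) = 1/2 + 1 := by norm_num
  rw [this, Real.Gamma_add_one (by norm_num), Real.Gamma_one_half_eq]
  ring

private lemma gamma_five_half : Real.Gamma (5/2) = 3 * √π / 4 := by
  have : (5/2 : ℝ) = 3/2 + 1 := by norm_num
  rw [this, Real.Gamma_add_one (by norm_num), gamma_three_half]
  ring

private lemma m2 : ∫ x, x^2 ∂(gaussianReal 0 (1/2)) = 1/2 := by
  rw [integral_gr_half]
  simp_rw [mul_assoc, integral_const_mul, mul_comm (rexp _)]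
  have := moment_exp 1
  norm_num at this ⊢
  rw [this, gamma_three_half]
  rw [inv_mul_eq_div, div_eq_iff (by positivity)]
  ring

private lemma m4 : ∫ x, x^4 ∂(gaussianReal 0 (1/2)) = 3/4 := by
  rw [integral_gr_half]
  simp_rw [mul_assoc, integral_const_mul, mul_comm (rexp _)]
  have := moment_exp 2
  norm_num [← pow_mul] at this ⊢
  rw [this]
  rw [gamma_five_half]
  rw [inv_mul_eq_div, div_eq_iff (by positivity)]
  ring

private lemma integrable_pow_gr (k : ℕ) :
    Integrable (fun x : ℝ => x ^ k) (gaussianReal 0 (1/2)) := by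
  rw [gr_half, integrable_withDensity_iff (by fun_prop)
    (ae_of_all _ fun x => ENNReal.ofReal_lt_top)]
  have h2 : ∀ x:ℝ, (ENNReal.ofReal ((√π)⁻¹ * rexp (-x^2))).toReal = (√π)⁻¹ * rexp (-x^2) :=
    fun x => ENNReal.toReal_ofReal (by positivity)
  simp_rw [h2]
  have h := integrable_rpow_mul_exp_neg_mul_sq (b:=1) zero_lt_one (s:=(k:ℝ))
    (by exact_mod_cast neg_one_lt_zero.trans_le (Nat.cast_nonneg k))
  simp_rw [Real.rpow_natCast, neg_one_mul] at h
  simpa [mul_comm, mul_assoc, mul_left_comm] using h.const_mul ((√π)⁻¹)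

private lemma integral_abs4_std : ∫ z : ℂ, ‖z‖ ^ 4 ∂stdComplexGaussian = 2 := by
  rw [stdComplexGaussian, MeasureTheory.integral_map_equiv]
  have hpt : (fun p : ℝ × ℝ => ‖Complex.measurableEquivRealProd.symm p‖ ^ 4)
      = fun p : ℝ × ℝ => (p.1^2 + p.2^2)^2 := by
    ext p
    have : ‖Complex.measurableEquivRealProd.symm p‖ ^ 4
        = (Complex.normSq (Complex.measurableEquivRealProd.symm p)) ^ 2 := by
      rw [← Complex.sq_norm, ← pow_mul]
    rw [this]
    congr 1
    simp [Complex.measurableEquivRealProd, Complex.normSq_apply]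
    ring
  rw [hpt]
  set μ := gaussianReal 0 (1/2)
  have h2 : Integrable (fun x : ℝ => x ^ 2) μ := integrable_pow_gr 2
  have h4 : Integrable (fun x : ℝ => x ^ 4) μ := integrable_pow_gr 4
  have h1 : Integrable (fun x : ℝ => (1:ℝ)) μ := integrable_const 1
  have e1 : Integrable (fun p : ℝ × ℝ => p.1^4 * 1) (μ.prod μ) := h4.mul_prod h1
  have e2 : Integrable (fun p : ℝ × ℝ => (2 * p.1^2) * p.2^2) (μ.prod μ) :=
    (h2.const_mul 2).mul_prod h2
  have e3 : Integrable (fun p : ℝ × ℝ => (1:ℝ) * p.2^4) (μ.prod μ) := h1.mul_prod h4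
  have key : ∀ p : ℝ × ℝ, (p.1^2 + p.2^2)^2
      = (p.1^4 * 1 + (2 * p.1^2) * p.2^2) + 1 * p.2^4 := by intro p; ring
  simp_rw [key]
  rw [integral_add (f := fun p : ℝ × ℝ => p.1^4 * 1 + (2 * p.1^2) * p.2^2)
    (g := fun p : ℝ × ℝ => 1 * p.2^4) (e1.add e2) e3,
    integral_add e1 e2,
    integral_prod_mul (f := fun x:ℝ => x^4) (g := fun _:ℝ => (1:ℝ)),
    integral_prod_mul (f := fun x:ℝ => 2 * x^2) (g := fun x:ℝ => x^2),
    integral_prod_mul (f := fun _:ℝ => (1:ℝ)) (g := fun x:ℝ => x^4),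
    integral_const_mul, m2, m4, integral_const]
  simp
  norm_num

private lemma prod_pair {M : Type*} [CommMonoid M] (n : ℕ) (g : Fin (2*n) → M) :
    ∏ j : Fin n, (g (lo n j) * g (hi n j)) = ∏ i, g i := by
  let e : Fin n × Fin 2 ≃ Fin (2*n) := finProdFinEquiv.trans (finCongr (mul_comm n 2))
  rw [← Equiv.prod_comp e g, Fintype.prod_prod_type]
  refine Finset.prod_congr rfl fun j _ => ?_
  rw [Fin.prod_univ_two]
  have h0 : e (j, 0) = lo n j := by
    apply Fin.ext; simp [e, finProdFinEquiv, lo]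
  have h1 : e (j, 1) = hi n j := by
    apply Fin.ext; simp [e, finProdFinEquiv, hi]; omega
  rw [h0, h1]

private lemma hafnian_row (n : ℕ) (X : Fin 1 → Fin (2*n) → ℂ) :
    hafnian n ((Matrix.of X)ᵀ * Matrix.of X)
      = (((2*n).factorial : ℂ) / (2 ^ n * n.factorial)) * ∏ i, X 0 i := by
  have hA : ∀ a b, ((Matrix.of X)ᵀ * Matrix.of X) a b = X 0 a * X 0 b := by
    intro a b
    simp [Matrix.mul_apply, Fin.sum_univ_one]
  have hterm : ∀ σ : Equiv.Perm (Fin (2*n)),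
      ∏ j : Fin n, ((Matrix.of X)ᵀ * Matrix.of X) (σ (lo n j)) (σ (hi n j)) = ∏ i, X 0 i := by
    intro σ
    simp_rw [hA]
    rw [prod_pair n (fun i => X 0 (σ i)), Equiv.prod_comp σ (X 0)]
  rw [hafnian]
  simp_rw [hterm]
  rw [Finset.sum_const, Finset.card_univ, Fintype.card_perm, Fintype.card_fin, nsmul_eq_mul]
  ring

end Auxiliary

/-- For `n ≥ 1` and `X` a `1 × 2n` row vector of i.i.d. standard complex
Gaussians, `E[|Haf(XᵀX)|⁴] = ((2n−1)!!)⁴ · 4^n`, where `(2n−1)!! = (2n)!/(2^n n!)`. -/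
theorem expectation_fourth_hafnian_one_row (n : ℕ) (hn : 1 ≤ n) :
    (∫ X, ‖hafnian n ((Matrix.of X)ᵀ * Matrix.of X)‖ ^ 4 ∂gaussianMatrix 1 n) =
      ((2 * n).factorial / (2 ^ n * n.factorial) : ℝ) ^ 4 * 4 ^ n := by
  set C : ℝ := ((2 * n).factorial / (2 ^ n * n.factorial) : ℝ) with hC
  have hpt : ∀ X : Fin 1 → Fin (2*n) → ℂ,
      ‖hafnian n ((Matrix.of X)ᵀ * Matrix.of X)‖ ^ 4
        = C ^ 4 * ∏ i, ‖X 0 i‖ ^ 4 := by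
    intro X
    rw [hafnian_row, norm_mul, mul_pow]
    have hc : (((2*n).factorial : ℂ) / (2 ^ n * n.factorial)) = (C : ℂ) := by
      rw [hC]; push_cast; ring
    rw [hc, Complex.norm_real, Real.norm_eq_abs, abs_of_nonneg (by positivity), norm_prod]
    rw [← Finset.prod_pow]
  simp_rw [hpt]
  rw [MeasureTheory.integral_const_mul]
  letI : MeasureSpace ℂ := ⟨stdComplexGaussian⟩
  have hvol : gaussianMatrix 1 n = (volume : Measure (Fin 1 → Fin (2*n) → ℂ)) := rfl
  rw [hvol]
  haveI hsf : SigmaFinite (volume : Measure ℂ) :=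
    inferInstanceAs (SigmaFinite stdComplexGaussian)
  haveI : IsProbabilityMeasure (volume : Measure (Fin (2*n) → ℂ)) :=
    inferInstanceAs (IsProbabilityMeasure (Measure.pi fun _ : Fin (2*n) => stdComplexGaussian))
  have hinner : ∫ Y : Fin (2*n) → ℂ, ∏ i, ‖Y i‖ ^ 4 = (2:ℝ)^(2*n) := by
    rw [show (volume : Measure (Fin (2*n) → ℂ)) = Measure.pi fun _ => volume from rfl,
      MeasureTheory.integral_fintype_prod_eq_pow (ι := Fin (2*n))
      (fun z : ℂ => ‖z‖ ^ 4)]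
    rw [show (volume : Measure ℂ) = stdComplexGaussian from rfl, integral_abs4_std]
    simp
  have houter : ∫ X : Fin 1 → Fin (2*n) → ℂ, ∏ i, ‖X 0 i‖ ^ 4 = (2:ℝ)^(2*n) := by
    have hsplit : ∀ X : Fin 1 → Fin (2*n) → ℂ, (∏ i, ‖X 0 i‖ ^ 4)
        = ∏ j : Fin 1, ∏ i, ‖X j i‖ ^ 4 := by
      intro X; rw [Fin.prod_univ_one]
    simp_rw [hsplit]
    rw [show (volume : Measure (Fin 1 → Fin (2*n) → ℂ)) = Measure.pi fun _ => volume from rfl,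
      MeasureTheory.integral_fintype_prod_eq_prod (ι := Fin 1)
      (fun _ (Y : Fin (2*n) → ℂ) => ∏ i, ‖Y i‖ ^ 4)]
    rw [Fin.prod_univ_one, hinner]
  rw [houter, pow_mul]
  norm_num
end GBS
end
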